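/- (Richardson) Let (W,S) be a Coxeter system and let w ∈ W be an involution (w² = 1 and w ≠ 1). Then there exist a subset I ⊆ S with W_I finite and an element u ∈ W_I such that: u is the longest element of W_I (i.e., ℓ(v) ≤ ℓ(u) for all v ∈ W_I), u lies in the center of W_I, and w is conjugate to u in W. -/

import Mathlib

namespace RichardsonAux

open List CoxeterSystem

attribute [local instance] Classical.propDecidable

private theorem conj_eq_iff {G : Type*} [Group G] (p t u : G) :
    p * t * p⁻¹ = u ↔ t = p⁻¹ * u * p := by
  constructor
  · intro h; rw [← h]; group
  · intro h; rw [h]; group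

variable {B W : Type*} [Group W] {M : CoxeterMatrix B} (cs : CoxeterSystem M W)

local prefix:100 "s" => cs.simple
local prefix:100 "π" => cs.wordProd
local prefix:100 "ℓ" => cs.length
local prefix:100 "ris" => cs.rightInvSeq
local prefix:100 "lis" => cs.leftInvSeq

/-- The standard `ZMod 2`-cocycle map. -/
noncomputable def F (i : B) : Function.End (W × ZMod 2) :=
  fun x => (s i * x.1 * s i, x.2 + if x.1 = s i then 1 else 0)

theorem F_apply (i : B) (t : W) (z : ZMod 2) :
    F cs i (t, z) = (s i * t * s i, z + if t = s i then 1 else 0) := rfl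

theorem FF_pow (i j : B) (k : ℕ) (t : W) (z : ZMod 2) :
    ((F cs i * F cs j) ^ k) (t, z) =
      ((s i * s j) ^ k * t * ((s i * s j) ^ k)⁻¹,
        z + ∑ l ∈ Finset.range (2 * k), if t = s j * (s i * s j) ^ l then 1 else 0) := by
  set a := s i with ha
  set b := s j with hb
  have ha' : a⁻¹ = a := cs.inv_simple i
  have hb' : b⁻¹ = b := cs.inv_simple j
  set p := a * b with hp
  have hpinv : p⁻¹ = b * a := by rw [hp, mul_inv_rev, ha', hb']
  have hpb : p⁻¹ * b = b * p := by rw [hpinv, hp, mul_assoc]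
  induction k generalizing t z with
  | zero => simp; rfl
  | succ k ih =>
    have h1 : ((F cs i * F cs j) ^ (k+1)) (t, z)
        = ((F cs i * F cs j) ^ k) ((F cs i * F cs j) (t, z)) := by
      rw [pow_succ]; rfl
    rw [h1, show (F cs i * F cs j) (t, z) = F cs i (F cs j (t, z)) from rfl,
      F_apply, F_apply, ih]
    have e1 : a * (b * t * b) * a = p * t * p⁻¹ := by rw [hp, hpinv]; group
    have e2 : ∀ l : ℕ, (p * t * p⁻¹ = b * p ^ l) ↔ (t = b * p ^ (l + 2)) := by
      intro l
      rw [conj_eq_iff]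
      have : p⁻¹ * (b * p ^ l) * p = b * p ^ (l + 2) := by
        calc p⁻¹ * (b * p ^ l) * p = (p⁻¹ * b) * (p ^ l * p) := by group
          _ = b * (p * (p ^ l * p)) := by rw [hpb]; group
          _ = b * p ^ (l + 2) := by rw [← pow_succ, ← pow_succ']
      rw [this]
    have e3 : (b * t * b = a) ↔ (t = b * p ^ 1) := by
      nth_rewrite 2 [← hb']
      rw [conj_eq_iff, hb', pow_one, hp, ← mul_assoc]
    have e0 : (t = b) ↔ (t = b * p ^ 0) := by rw [pow_zero, mul_one]
    rw [e1, Prod.mk.injEq]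
    constructor
    · show p ^ k * (p * t * p⁻¹) * (p ^ k)⁻¹ = p ^ (k+1) * t * (p ^ (k+1))⁻¹
      rw [pow_succ]; group
    · show (z + (if t = b then (1:ZMod 2) else 0) + if b * t * b = a then 1 else 0)
          + ∑ l ∈ Finset.range (2 * k), (if p * t * p⁻¹ = b * p ^ l then (1:ZMod 2) else 0)
        = z + ∑ l ∈ Finset.range (2 * (k+1)), if t = b * p ^ l then 1 else 0
      simp_rw [e2, e3, e0]
      rw [show 2 * (k + 1) = (2 * k) + 1 + 1 from by ring,
        Finset.sum_range_succ', Finset.sum_range_succ']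
      simp only [show ∀ l : ℕ, l + 1 + 1 = l + 2 from fun l => rfl, Nat.zero_add, pow_one]
      ring

theorem F_liftable : M.IsLiftable (F cs) := by
  intro i j
  set m := M i j with hm
  have hpm : (s i * s j) ^ m = 1 := cs.simple_mul_simple_pow i j
  funext x
  obtain ⟨t, z⟩ := x
  rw [FF_pow, hpm]
  have hsum : ∑ l ∈ Finset.range (2 * m), (if t = s j * (s i * s j) ^ l then (1:ZMod 2) else 0)
      = 0 := by
    rw [two_mul, Finset.sum_range_add]
    have : ∀ l : ℕ, (s i * s j) ^ (m + l) = (s i * s j) ^ l := by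
      intro l; rw [pow_add, hpm, one_mul]
    simp_rw [this]
    generalize (∑ l ∈ Finset.range m, if t = s j * (s i * s j) ^ l then (1:ZMod 2) else 0) = x
    fin_cases x <;> rfl
  rw [hsum]
  simp
  rfl

/-- The homomorphism `W →* Function.End (W × ZMod 2)` recording conjugation plus the
reflection-cocycle parity. -/
noncomputable def Phi : W →* Function.End (W × ZMod 2) :=
  cs.lift ⟨F cs, F_liftable cs⟩

theorem Phi_simple (i : B) : Phi cs (s i) = F cs i :=
  cs.lift_apply_simple (F_liftable cs) i

theorem Phi_wordProd (ω : List B) (t : W) (z : ZMod 2) :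
    Phi cs (π ω) (t, z) = (π ω * t * (π ω)⁻¹, z + ((ris ω).count t : ZMod 2)) := by
  induction ω generalizing t z with
  | nil => simp [rightInvSeq]; rfl
  | cons i ω ih =>
    rw [cs.wordProd_cons, map_mul]
    have happ : ∀ (A B' : Function.End (W × ZMod 2)) x, (A * B') x = A (B' x) := fun _ _ _ => rfl
    rw [happ, ih, Phi_simple, F_apply]
    have hris : cs.rightInvSeq (i :: ω) = ((π ω)⁻¹ * (s i) * (π ω)) :: cs.rightInvSeq ω := rfl
    rw [Prod.mk.injEq]
    constructor
    · show s i * (π ω * t * (π ω)⁻¹) * s i = (s i * π ω) * t * (s i * π ω)⁻¹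
      rw [mul_inv_rev, cs.inv_simple]; group
    · show z + ((ris ω).count t : ZMod 2) + (if π ω * t * (π ω)⁻¹ = s i then 1 else 0)
        = z + (((ris (i :: ω)).count t : ℕ) : ZMod 2)
      rw [hris, List.count_cons]
      have : (π ω * t * (π ω)⁻¹ = s i) ↔ (t = (π ω)⁻¹ * s i * π ω) := conj_eq_iff _ _ _
      rw [this]
      rcases Nat.cast_add (R := ZMod 2) ((ris ω).count t)
          (if ((π ω)⁻¹ * s i * π ω == t) = true then 1 else 0) with _
      rw [Nat.cast_add]
      by_cases h : t = (π ω)⁻¹ * s i * π ω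
      · rw [if_pos h, if_pos (by simp [beq_iff_eq, h.symm])]
        push_cast
        ring
      · rw [if_neg h, if_neg (by simp [beq_iff_eq]; exact fun hh => h hh.symm)]
        push_cast
        ring

/-- The parity of the number of occurrences of `t` in the right inversion sequence of any
word for `w`. -/
noncomputable def nu (w t : W) : ZMod 2 := (Phi cs w (t, 0)).2

theorem Phi_apply (w t : W) (z : ZMod 2) :
    Phi cs w (t, z) = (w * t * w⁻¹, z + nu cs w t) := by
  obtain ⟨ω, -, rfl⟩ := cs.exists_reduced_word w
  rw [Phi_wordProd, nu, Phi_wordProd, Prod.mk.injEq]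
  exact ⟨rfl, by rw [Prod.snd, zero_add]⟩

theorem nu_eq_count (ω : List B) (t : W) :
    nu cs (π ω) t = ((ris ω).count t : ZMod 2) := by
  rw [nu, Phi_wordProd, Prod.snd, zero_add]

theorem zmod2_cases (x : ZMod 2) : x = 0 ∨ x = 1 := by fin_cases x; exacts [Or.inl rfl, Or.inr rfl]

/-- If `nu cs w t = 1` then `t` is a right inversion of `w`. -/
theorem isRightInversion_of_nu_eq_one {w t : W} (h : nu cs w t = 1) :
    cs.IsRightInversion w t := by
  obtain ⟨ω, hred, rfl⟩ := cs.exists_reduced_word' w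
  have hcount : (ris ω).count t % 2 = 1 := by
    have := nu_eq_count cs ω t
    rw [h] at this
    have := congrArg ZMod.val this.symm
    rwa [ZMod.val_natCast] at this
  have hmem : t ∈ ris ω := by
    rw [← List.count_pos_iff]
    omega
  exact cs.isRightInversion_of_mem_rightInvSeq hred hmem

/-- `nu t t = 1` for any reflection `t`. -/
theorem nu_refl_self {t : W} (ht : cs.IsReflection t) : nu cs t t = 1 := by
  obtain ⟨y, i, rfl⟩ := ht
  set t := y * s i * y⁻¹ with htdef
  have h1 : Phi cs y⁻¹ (t, 0) = (s i, nu cs y⁻¹ t) := by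
    rw [Phi_apply]
    congr 1
    · rw [htdef]; group
    · rw [zero_add]
  have h2 : Phi cs (s i) (s i, nu cs y⁻¹ t) = (s i, nu cs y⁻¹ t + 1) := by
    rw [Phi_simple, F_apply, if_pos rfl]
    congr 1
    rw [cs.simple_mul_simple_self, one_mul]
  have h3 : Phi cs y (s i, nu cs y⁻¹ t + 1) = (t, nu cs y⁻¹ t + 1 + nu cs y (s i)) := by
    rw [Phi_apply, htdef]
  have hinv : nu cs y⁻¹ t + nu cs y (s i) = 0 := by
    have key : Phi cs y (Phi cs y⁻¹ (t, 0)) = (t, 0) := by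
      have hone : Phi cs y * Phi cs y⁻¹ = 1 := by rw [← map_mul, mul_inv_cancel, map_one]
      calc Phi cs y (Phi cs y⁻¹ (t, 0)) = (Phi cs y * Phi cs y⁻¹) (t, 0) := rfl
        _ = (t, 0) := by rw [hone]; rfl
    rw [h1, Phi_apply] at key
    exact congrArg Prod.snd key
  have h4 : Phi cs (y * s i * y⁻¹) (t, 0) = (t, nu cs y⁻¹ t + 1 + nu cs y (s i)) := by
    rw [map_mul, map_mul]
    calc (Phi cs y * Phi cs (s i) * Phi cs y⁻¹) (t, 0)
        = Phi cs y (Phi cs (s i) (Phi cs y⁻¹ (t, 0))) := rfl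
      _ = (t, nu cs y⁻¹ t + 1 + nu cs y (s i)) := by rw [h1, h2, h3]
  rw [Phi_apply] at h4
  have h5 := congrArg Prod.snd h4
  simp only [Prod.snd, zero_add] at h5
  rw [← htdef] at h5
  rw [h5, show nu cs y⁻¹ t + 1 + nu cs y (s i) = (nu cs y⁻¹ t + nu cs y (s i)) + 1 by ring,
    hinv, zero_add]

theorem nu_mul_reflection (w : W) {t : W} (ht : cs.IsReflection t) :
    nu cs (w * t) t = nu cs w t + 1 := by
  have h1 : Phi cs t (t, 0) = (t, 1) := by
    rw [Phi_apply, nu_refl_self cs ht, zero_add]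
    congr 1
    rw [show t * t * t⁻¹ = t by group]
  have h2 : Phi cs (w * t) (t, 0) = Phi cs w (Phi cs t (t, 0)) := by rw [map_mul]; rfl
  rw [h1, Phi_apply, Phi_apply] at h2
  have := congrArg Prod.snd h2
  simp only [Prod.snd, zero_add] at this
  rw [this, add_comm]

/-- Strong exchange parity criterion: for a reflection `t`, `t` is a right inversion of `w`
iff `nu cs w t = 1`. -/
theorem nu_eq_one_iff {w t : W} (ht : cs.IsReflection t) :
    nu cs w t = 1 ↔ ℓ (w * t) < ℓ w := by
  constructor
  · intro h
    exact (isRightInversion_of_nu_eq_one cs h).2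
  · intro h
    rcases zmod2_cases (nu cs w t) with h0 | h1
    · exfalso
      have : nu cs (w * t) t = 1 := by rw [nu_mul_reflection cs _ ht, h0, zero_add]
      have h2 := (isRightInversion_of_nu_eq_one cs this).2
      rw [mul_assoc, ht.mul_self, mul_one] at h2
      omega
    · exact h1

/-- If `t` is a right inversion of `w` and `ω` is a reduced word for `w`, then
`t` appears in the right inversion sequence of `ω`. -/
theorem mem_rightInvSeq_of_isRightInversion {ω : List B} (hred : cs.IsReduced ω) {t : W}
    (ht : cs.IsReflection t) (h : ℓ (π ω * t) < ℓ (π ω)) : t ∈ ris ω := by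
  have h1 : nu cs (π ω) t = 1 := (nu_eq_one_iff cs ht).mpr h
  rw [nu_eq_count] at h1
  have hcount : (ris ω).count t % 2 = 1 := by
    have := congrArg ZMod.val h1
    rwa [ZMod.val_natCast] at this
  rw [← List.count_pos_iff]
  omega

/-- Right exchange property. -/
theorem right_exchange {ω : List B} (hred : cs.IsReduced ω) {i : B}
    (h : ℓ (π ω * s i) < ℓ (π ω)) :
    ∃ j < ω.length, π ω * s i = π (ω.eraseIdx j) := by
  have hmem : s i ∈ ris ω :=
    mem_rightInvSeq_of_isRightInversion cs hred (cs.isReflection_simple i) h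
  obtain ⟨j, hj, hget⟩ := List.mem_iff_getElem.mp hmem
  rw [cs.length_rightInvSeq] at hj
  refine ⟨j, hj, ?_⟩
  have hgetD : (ris ω).getD j 1 = s i := by
    rw [List.getD_eq_getElem?_getD, List.getElem?_eq_getElem (by rwa [cs.length_rightInvSeq])]
    simpa using hget
  rw [← hgetD]
  exact cs.wordProd_mul_getD_rightInvSeq ω j

/-- If `t` is a left inversion of `w` and `ω` is a reduced word for `w`, then
`t` appears in the left inversion sequence of `ω`. -/
theorem mem_leftInvSeq_of_isLeftInversion {ω : List B} (hred : cs.IsReduced ω) {t : W}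
    (ht : cs.IsReflection t) (h : ℓ (t * π ω) < ℓ (π ω)) : t ∈ lis ω := by
  have hrev : cs.IsReduced ω.reverse := (cs.isReduced_reverse_iff ω).mpr hred
  have h2 : ℓ (π ω.reverse * t) < ℓ (π ω.reverse) := by
    rw [cs.wordProd_reverse]
    have : (π ω)⁻¹ * t = (t⁻¹ * π ω)⁻¹ := by group
    rw [this, cs.length_inv, cs.length_inv, ht.inv]
    exact h
  have := mem_rightInvSeq_of_isRightInversion cs hrev ht h2
  rw [cs.rightInvSeq_reverse] at this
  exact List.mem_reverse.mp this

/-- Left exchange property. -/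
theorem left_exchange {ω : List B} (hred : cs.IsReduced ω) {i : B}
    (h : ℓ (s i * π ω) < ℓ (π ω)) :
    ∃ j < ω.length, s i * π ω = π (ω.eraseIdx j) := by
  have hmem : s i ∈ lis ω :=
    mem_leftInvSeq_of_isLeftInversion cs hred (cs.isReflection_simple i) h
  obtain ⟨j, hj, hget⟩ := List.mem_iff_getElem.mp hmem
  rw [cs.length_leftInvSeq] at hj
  refine ⟨j, hj, ?_⟩
  have hgetD : (lis ω).getD j 1 = s i := by
    rw [List.getD_eq_getElem?_getD, List.getElem?_eq_getElem (by rwa [cs.length_leftInvSeq])]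
    simpa using hget
  rw [← hgetD]
  exact cs.getD_leftInvSeq_mul_wordProd ω j

/-- Every element of a standard parabolic subgroup is a product of simple reflections
with indices in `I`. -/
theorem exists_word_of_mem_parabolic {I : Set B} {u : W}
    (hu : u ∈ Subgroup.closure (cs.simple '' I)) :
    ∃ ω : List B, (∀ b ∈ ω, b ∈ I) ∧ π ω = u := by
  induction hu using Subgroup.closure_induction with
  | mem x hx =>
    obtain ⟨i, hi, rfl⟩ := hx
    exact ⟨[i], by simpa using hi, by simp⟩
  | one => exact ⟨[], by simp, by simp⟩
  | mul x y _ _ ihx ihy =>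
    obtain ⟨ω₁, h1, rfl⟩ := ihx
    obtain ⟨ω₂, h2, rfl⟩ := ihy
    exact ⟨ω₁ ++ ω₂, by
      intro b hb
      rcases List.mem_append.mp hb with h | h
      exacts [h1 b h, h2 b h], by rw [cs.wordProd_append]⟩
  | inv x _ ihx =>
    obtain ⟨ω, h1, rfl⟩ := ihx
    exact ⟨ω.reverse, fun b hb => h1 b (List.mem_reverse.mp hb), by rw [cs.wordProd_reverse]⟩

/-- Every element of a standard parabolic subgroup has a reduced word over `I`. -/
theorem exists_reduced_word_of_mem_parabolic {I : Set B} {u : W}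
    (hu : u ∈ Subgroup.closure (cs.simple '' I)) :
    ∃ ω : List B, (∀ b ∈ ω, b ∈ I) ∧ cs.IsReduced ω ∧ π ω = u := by
  obtain ⟨ω, hI, rfl⟩ := exists_word_of_mem_parabolic cs hu
  clear hu
  suffices h : ∀ (n : ℕ) (ω : List B), ω.length = n → (∀ b ∈ ω, b ∈ I) →
      ∃ ω' : List B, (∀ b ∈ ω', b ∈ I) ∧ cs.IsReduced ω' ∧ π ω' = π ω by
    exact h ω.length ω rfl hI
  clear hI ω
  intro n
  induction n using Nat.strong_induction_on with
  | _ n ih =>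
  intro ω hn hI
  by_cases hred : cs.IsReduced ω
  · exact ⟨ω, hI, hred, rfl⟩
  rcases List.eq_nil_or_concat ω with rfl | ⟨ω₁, i, rfl⟩
  · exact absurd (by simp [CoxeterSystem.IsReduced]) hred
  simp only [List.concat_eq_append] at hn hI hred ⊢
  have hIω₁ : ∀ b ∈ ω₁, b ∈ I := fun b hb => hI b (by simp [hb])
  have hiI : i ∈ I := hI i (by simp)
  have hnlen : ω₁.length + 1 = n := by simpa using hn
  by_cases hred₁ : cs.IsReduced ω₁
  · have hlt : ℓ (π ω₁ * s i) < ℓ (π ω₁) := by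
      have h1 : ℓ (π (ω₁ ++ [i])) < (ω₁ ++ [i]).length :=
        lt_of_le_of_ne (cs.length_wordProd_le _) hred
      rw [cs.wordProd_append, cs.wordProd_singleton] at h1
      simp only [List.length_append, List.length_singleton] at h1
      have hne := cs.length_mul_simple_ne (π ω₁) i
      have hr1 : ℓ (π ω₁) = ω₁.length := hred₁
      omega
    obtain ⟨j, hj, heq⟩ := right_exchange cs hred₁ hlt
    have hlen : (ω₁.eraseIdx j).length = ω₁.length - 1 := by
      rw [List.length_eraseIdx]
      simp [hj]
    obtain ⟨ω', hI', hred', heq'⟩ := ih (ω₁.eraseIdx j).length (by omega)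
      (ω₁.eraseIdx j) rfl (fun b hb => hIω₁ b (List.eraseIdx_subset hb))
    refine ⟨ω', hI', hred', ?_⟩
    rw [heq', ← heq, cs.wordProd_append, cs.wordProd_singleton]
  · obtain ⟨ω', hI', hred', heq'⟩ := ih ω₁.length (by omega) ω₁ rfl hIω₁
    have hlen' : ω'.length < ω₁.length := by
      have hr : ℓ (π ω') = ω'.length := hred'
      rw [heq'] at hr
      rw [← hr]
      exact lt_of_le_of_ne (cs.length_wordProd_le _) hred₁
    obtain ⟨ω'', hI'', hred'', heq''⟩ := ih (ω' ++ [i]).length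
      (by simp only [List.length_append, List.length_singleton]; omega) (ω' ++ [i]) rfl
      (by intro b hb
          rcases List.mem_append.mp hb with h | h
          · exact hI' b h
          · simp only [List.mem_singleton] at h
            exact h ▸ hiI)
    refine ⟨ω'', hI'', hred'', ?_⟩
    rw [heq'', cs.wordProd_append, cs.wordProd_append, heq']

/-- A nontrivial element of a parabolic subgroup has a left descent in `I`. -/
theorem exists_leftDescent_in_parabolic {I : Set B} {u : W}
    (hu : u ∈ Subgroup.closure (cs.simple '' I)) (hne : u ≠ 1) :
    ∃ i ∈ I, cs.IsLeftDescent u i := by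
  obtain ⟨ω, hI, hred, rfl⟩ := exists_reduced_word_of_mem_parabolic cs hu
  rcases ω with _ | ⟨i, ω'⟩
  · exact absurd (by simp) hne
  refine ⟨i, hI i (by simp), ?_⟩
  have hr : ℓ (π (i :: ω')) = ω'.length + 1 := by
    have : ℓ (π (i :: ω')) = (i :: ω').length := hred
    simpa using this
  have : ℓ (s i * π (i :: ω')) ≤ ω'.length := by
    rw [cs.wordProd_cons, ← mul_assoc, cs.simple_mul_simple_self, one_mul]
    exact cs.length_wordProd_le ω'
  unfold CoxeterSystem.IsLeftDescent
  omega

/-- Key dichotomy: if `i` is both a left and a right descent of `v`, then either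
conjugating by `s i` shortens `v`, or `s i` commutes with `v`. -/
theorem descent_conj_shorter_or_comm {v : W} {i : B}
    (hl : cs.IsLeftDescent v i) (hr : cs.IsRightDescent v i) :
    ℓ (s i * v * s i) < ℓ v ∨ s i * v * s i = v := by
  obtain ⟨ω₁, hlen₁', heq₁⟩ := cs.exists_reduced_word (s i * v)
  have hlen₁ : ω₁.length = ℓ (s i * v) := by rw [heq₁]; exact hlen₁'.symm
  have hv : π (i :: ω₁) = v := by
    rw [cs.wordProd_cons, ← heq₁, ← mul_assoc, cs.simple_mul_simple_self, one_mul]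
  have hlv : ℓ (s i * v) + 1 = ℓ v := (cs.isLeftDescent_iff).mp hl
  have hred : cs.IsReduced (i :: ω₁) := by
    show ℓ (π (i :: ω₁)) = (i :: ω₁).length
    rw [hv]
    simp [hlen₁]
    omega
  have hrv : ℓ (π (i :: ω₁) * s i) < ℓ (π (i :: ω₁)) := by rw [hv]; exact hr
  obtain ⟨j, hj, heq⟩ := right_exchange cs hred hrv
  rcases j with _ | j'
  · right
    rw [List.eraseIdx_cons_zero, hv] at heq
    rw [mul_assoc, heq, ← heq₁, ← mul_assoc, cs.simple_mul_simple_self, one_mul]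
  · left
    rw [List.eraseIdx_cons_succ, hv, cs.wordProd_cons] at heq
    have : s i * v * s i = π (ω₁.eraseIdx j') := by
      rw [mul_assoc, heq, ← mul_assoc, cs.simple_mul_simple_self, one_mul]
    rw [this]
    calc ℓ (π (ω₁.eraseIdx j')) ≤ (ω₁.eraseIdx j').length := cs.length_wordProd_le _
      _ ≤ ω₁.length := (List.length_eraseIdx_le _ _)
      _ < ℓ v := by omega

/-- Minimal coset representatives: there is `x` in the coset `W_I v` of minimal length, and
lengths add: `ℓ (u * x) = ℓ u + ℓ x` for all `u ∈ W_I`. -/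
theorem parabolic_coset_min (I : Set B) (v : W) :
    ∃ x : W, (∃ u₀ ∈ Subgroup.closure (cs.simple '' I), x = u₀ * v) ∧
      (∀ u ∈ Subgroup.closure (cs.simple '' I), ℓ x ≤ ℓ (u * v)) ∧
      (∀ u ∈ Subgroup.closure (cs.simple '' I), ℓ (u * x) = ℓ u + ℓ x) := by
  set K := Subgroup.closure (cs.simple '' I) with hK
  -- find minimal length element of the coset
  set S : Set ℕ := {n | ∃ u ∈ K, ℓ (u * v) = n} with hS
  have hSne : S.Nonempty := ⟨ℓ v, 1, one_mem K, by rw [one_mul]⟩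
  obtain ⟨x₀, hx₀K, hx₀⟩ := Nat.sInf_mem hSne
  set x := x₀ * v with hx
  have hmin : ∀ u ∈ K, ℓ x ≤ ℓ (u * v) := by
    intro u hu
    rw [hx, hx₀]
    exact Nat.sInf_le ⟨u, hu, rfl⟩
  refine ⟨x, ⟨x₀, hx₀K, rfl⟩, hmin, ?_⟩
  suffices h : ∀ (n : ℕ) (u : W), u ∈ K → ℓ u = n → ℓ (u * x) = ℓ u + ℓ x by
    intro u hu; exact h (ℓ u) u hu rfl
  intro n
  induction n using Nat.strong_induction_on with
  | _ n ih =>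
  intro u huK hn
  by_cases hu1 : u = 1
  · rw [hu1, one_mul, cs.length_one, zero_add]
  obtain ⟨i, hiI, hdesc⟩ := exists_leftDescent_in_parabolic cs huK hu1
  have hsiK : s i ∈ K := Subgroup.subset_closure ⟨i, hiI, rfl⟩
  set u' := s i * u with hu'
  have hu'K : u' ∈ K := mul_mem hsiK huK
  have hu'len : ℓ u' + 1 = ℓ u := (cs.isLeftDescent_iff).mp hdesc
  have ihu' : ℓ (u' * x) = ℓ u' + ℓ x := ih (ℓ u') (by omega) u' hu'K rfl
  have huu' : u = s i * u' := by rw [hu', ← mul_assoc, cs.simple_mul_simple_self, one_mul]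
  have hne := cs.length_simple_mul_ne (u' * x) i
  rcases cs.length_simple_mul (u' * x) i with h | h
  · -- length goes up: done
    calc ℓ (u * x) = ℓ (s i * (u' * x)) := by rw [huu', mul_assoc]
      _ = ℓ (u' * x) + 1 := h
      _ = ℓ u + ℓ x := by omega
  · -- length goes down: contradiction via exchange
    exfalso
    obtain ⟨α, hαI, hαred, hαeq⟩ := exists_reduced_word_of_mem_parabolic cs hu'K
    obtain ⟨ξ, hξlen', hξeq⟩ := cs.exists_reduced_word x
    have hξlen : ξ.length = ℓ x := by rw [hξeq]; exact hξlen'.symm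
    have hconc : π (α ++ ξ) = u' * x := by rw [cs.wordProd_append, hαeq, ← hξeq]
    have hred : cs.IsReduced (α ++ ξ) := by
      show ℓ (π (α ++ ξ)) = (α ++ ξ).length
      rw [hconc, ihu', List.length_append, hξlen]
      have : ℓ (π α) = α.length := hαred
      rw [hαeq] at this
      omega
    have hlt : ℓ (s i * π (α ++ ξ)) < ℓ (π (α ++ ξ)) := by
      rw [hconc]
      omega
    obtain ⟨j, hj, heq⟩ := left_exchange cs hred hlt
    rw [hconc] at heq
    rw [List.length_append] at hj
    by_cases hjα : j < α.length
    · rw [List.eraseIdx_append_of_lt_length hjα, cs.wordProd_append, ← hξeq] at heq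
      rw [← mul_assoc] at heq
      have hcancel : s i * u' = π (α.eraseIdx j) := mul_right_cancel heq
      have : ℓ (s i * u') ≤ (α.eraseIdx j).length := hcancel ▸ cs.length_wordProd_le _
      have hlen : (α.eraseIdx j).length = α.length - 1 := by
        rw [List.length_eraseIdx]; simp [hjα]
      have hαlen : α.length = ℓ u' := by
        have h2 : ℓ (π α) = α.length := hαred
        rw [hαeq] at h2; omega
      rw [← huu'] at this
      omega
    · push_neg at hjα
      rw [List.eraseIdx_append_of_length_le hjα, cs.wordProd_append, hαeq] at heq
      set ξ' := ξ.eraseIdx (j - α.length) with hξ'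
      have hx'C : π ξ' = (u'⁻¹ * s i * u') * x := by
        have h2 : u' * π ξ' = s i * (u' * x) := heq.symm
        calc π ξ' = u'⁻¹ * (u' * π ξ') := by group
          _ = u'⁻¹ * (s i * (u' * x)) := by rw [h2]
          _ = (u'⁻¹ * s i * u') * x := by group
      have hjξ : j - α.length < ξ.length := by omega
      have hξ'len : ξ'.length = ξ.length - 1 := by
        rw [hξ', List.length_eraseIdx]; simp [hjξ]
      have hshort : ℓ (π ξ') < ℓ x := by
        calc ℓ (π ξ') ≤ ξ'.length := cs.length_wordProd_le _
          _ = ξ.length - 1 := hξ'len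
          _ < ℓ x := by omega
      have humem : (u'⁻¹ * s i * u') * x₀ ∈ K :=
        mul_mem (mul_mem (mul_mem (inv_mem hu'K) hsiK) hu'K) hx₀K
      have : ℓ x ≤ ℓ (((u'⁻¹ * s i * u') * x₀) * v) := hmin _ humem
      rw [mul_assoc, ← hx] at this
      rw [hx'C] at hshort
      omega

/-- If `s j` commutes with `v`, then `nu v` is invariant under conjugation by `s j`. -/
theorem nu_conj_simple {v : W} {j : B} (hcomm : s j * v = v * s j) (t : W) :
    nu cs (v) (s j * t * s j) = nu cs v t := by
  have hv : s j * v * s j = v := by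
    rw [hcomm, mul_assoc, cs.simple_mul_simple_self, mul_one]
  have hphi : Phi cs v = Phi cs (s j) * Phi cs v * Phi cs (s j) := by
    rw [← map_mul, ← map_mul, hv]
  have happ : (Phi cs (s j) * Phi cs v * Phi cs (s j)) (t, 0)
      = Phi cs (s j) (Phi cs v (Phi cs (s j) (t, 0))) := rfl
  have h1 : Phi cs (s j) (t, 0) = (s j * t * s j, if t = s j then 1 else 0) := by
    rw [Phi_simple, F_apply, zero_add]
  have h2 : Phi cs v (s j * t * s j, (if t = s j then (1:ZMod 2) else 0))
      = (v * (s j * t * s j) * v⁻¹,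
          (if t = s j then (1:ZMod 2) else 0) + nu cs v (s j * t * s j)) := Phi_apply ..
  have h3 : Phi cs (s j) (v * (s j * t * s j) * v⁻¹,
        (if t = s j then (1:ZMod 2) else 0) + nu cs v (s j * t * s j))
      = (s j * (v * (s j * t * s j) * v⁻¹) * s j,
          ((if t = s j then (1:ZMod 2) else 0) + nu cs v (s j * t * s j))
            + if v * (s j * t * s j) * v⁻¹ = s j then 1 else 0) := by
    rw [Phi_simple, F_apply]
  have hcond : (v * (s j * t * s j) * v⁻¹ = s j) ↔ (t = s j) := by
    rw [conj_eq_iff]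
    have hv' : v⁻¹ * s j * v = s j := by
      have : v⁻¹ * (s j * v) = v⁻¹ * (v * s j) := by rw [hcomm]
      rw [← mul_assoc] at this
      rw [this]; group
    rw [hv']
    constructor
    · intro h
      have := congrArg (fun z => s j * z * s j) h
      calc t = s j * (s j * t * s j) * s j := by
            rw [← mul_assoc, ← mul_assoc, cs.simple_mul_simple_self, one_mul, mul_assoc,
              cs.simple_mul_simple_self, mul_one]
        _ = s j * s j * s j := by rw [this]
        _ = s j := by rw [cs.simple_mul_simple_self, one_mul]
    · intro h
      rw [h, cs.simple_mul_simple_self, one_mul]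
  have lhs_eq : Phi cs v (t, 0) = (v * t * v⁻¹, nu cs v t) := by
    rw [Phi_apply, zero_add]
  have rhs_eq : Phi cs v (t, 0)
      = (s j * (v * (s j * t * s j) * v⁻¹) * s j,
          ((if t = s j then (1:ZMod 2) else 0) + nu cs v (s j * t * s j))
            + if t = s j then 1 else 0) := by
    conv_lhs => rw [hphi]
    rw [happ, h1, h2, h3]
    congr 1
    rw [if_congr hcond rfl rfl]
  have := lhs_eq.symm.trans rhs_eq
  have hsnd := congrArg Prod.snd this
  simp only [Prod.snd] at hsnd
  rw [hsnd]
  generalize (if t = s j then (1:ZMod 2) else 0) = c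
  generalize nu cs v (s j * t * s j) = x
  rcases zmod2_cases c with h | h <;> rcases zmod2_cases x with h2 | h2 <;>
    subst h <;> subst h2 <;> decide

/-- `nu v` is invariant under conjugation by any product of commuting simples. -/
theorem nu_conj_word {v : W} {ζ : List B}
    (hcomm : ∀ b ∈ ζ, s b * v = v * s b) (t : W) :
    nu cs v (π ζ * t * (π ζ)⁻¹) = nu cs v t := by
  induction ζ with
  | nil => simp
  | cons b ζ ih =>
    have h1 : ∀ b' ∈ ζ, s b' * v = v * s b' := fun b' hb' => hcomm b' (by simp [hb'])
    have hb : s b * v = v * s b := hcomm b (by simp)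
    rw [cs.wordProd_cons]
    have : s b * π ζ * t * (s b * π ζ)⁻¹ = s b * (π ζ * t * (π ζ)⁻¹) * s b := by
      rw [mul_inv_rev, cs.inv_simple]; group
    rw [this, nu_conj_simple cs hb, ih h1]

open Pointwise in
theorem prod_mem_pow {G : Type*} [Group G] {A : Finset G} (h1 : (1:G) ∈ A) :
    ∀ (n : ℕ) (l : List G), l.length ≤ n → (∀ x ∈ l, x ∈ A) → l.prod ∈ A ^ n := by
  intro n
  induction n with
  | zero =>
    intro l hl _
    rw [List.length_eq_zero_iff.mp (Nat.le_zero.mp hl)]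
    simp
  | succ n ih =>
    intro l hl hmem
    rcases l with _ | ⟨a, l'⟩
    · have h0 : ([] : List G).prod ∈ A ^ n := ih [] (by simp) (by simp)
      rw [pow_succ']
      have := Finset.mul_mem_mul h1 h0
      rwa [one_mul] at this
    · rw [List.prod_cons, pow_succ']
      exact Finset.mul_mem_mul (hmem a (by simp))
        (ih l' (by simpa using hl) (fun x hx => hmem x (by simp [hx])))

/-- If `v` is an involution and `nu cs v t = 1`, then `t` appears in the left inversion
sequence of any reduced word for `v`. -/
theorem mem_lis_of_nu_one {v : W} (hvinv : v⁻¹ = v) {ωv : List B}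
    (hred : cs.IsReduced ωv) (heq : π ωv = v) {t : W} (hnu : nu cs v t = 1) :
    t ∈ lis ωv := by
  have h1 : ((lis ωv).count t : ZMod 2) = 1 := by
    have h2 : (lis ωv).count t = (ris ωv.reverse).count t := by
      rw [cs.rightInvSeq_reverse, List.count_reverse]
    rw [h2, ← nu_eq_count, cs.wordProd_reverse, heq, hvinv, hnu]
  have : (lis ωv).count t % 2 = 1 := by
    have := congrArg ZMod.val h1
    rwa [ZMod.val_natCast] at this
  rw [← List.count_pos_iff]
  omega

/-- Elements of the left inversion sequence of a word over `I` are parabolic conjugates of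
simple reflections in `I`. -/
theorem lis_elt_form {I : Set B} {ω : List B} (hI : ∀ b ∈ ω, b ∈ I) {t : W}
    (ht : t ∈ lis ω) :
    ∃ (ζ : List B) (i : B), (∀ b ∈ ζ, b ∈ I) ∧ i ∈ I ∧ t = π ζ * s i * (π ζ)⁻¹ := by
  obtain ⟨j, hj, hget⟩ := List.mem_iff_getElem.mp ht
  rw [cs.length_leftInvSeq] at hj
  have hgetD : (lis ω).getD j 1 = t := by
    rw [List.getD_eq_getElem?_getD, List.getElem?_eq_getElem (by rwa [cs.length_leftInvSeq])]
    simpa using hget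
  rw [cs.getD_leftInvSeq] at hgetD
  refine ⟨ω.take j, ω.get ⟨j, hj⟩, fun b hb => hI b (List.mem_of_mem_take hb),
    hI _ (List.get_mem ω ⟨j, hj⟩), ?_⟩
  rw [← hgetD]
  congr
  rw [List.getElem?_eq_getElem hj]
  rfl

open Pointwise in
theorem main_result (w : W) (hw2 : w * w = 1) (hw1 : w ≠ 1) :
    ∃ (I : Set B) (u : W),
      Finite ↥(Subgroup.closure (cs.simple '' I)) ∧
      u ∈ Subgroup.closure (cs.simple '' I) ∧
      (∀ v ∈ Subgroup.closure (cs.simple '' I), cs.length v ≤ cs.length u) ∧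
      (∀ v ∈ Subgroup.closure (cs.simple '' I), u * v = v * u) ∧
      IsConj w u := by
  classical
  -- choose a conjugate of minimal length
  set S : Set ℕ := {n | ∃ v, IsConj w v ∧ ℓ v = n} with hS
  have hSne : S.Nonempty := ⟨ℓ w, w, IsConj.refl w, rfl⟩
  obtain ⟨v, hconj, hlenv⟩ := Nat.sInf_mem hSne
  have hminim : ∀ v', IsConj w v' → ℓ v ≤ ℓ v' := by
    intro v' hconj'
    rw [hlenv]
    exact Nat.sInf_le ⟨v', hconj', rfl⟩
  obtain ⟨c, hc⟩ := isConj_iff.mp hconj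
  have hvv : v * v = 1 := by
    rw [← hc]
    calc c * w * c⁻¹ * (c * w * c⁻¹) = c * (w * w) * c⁻¹ := by group
      _ = 1 := by rw [hw2]; group
  have hv1 : v ≠ 1 := by
    intro h
    apply hw1
    rw [h] at hc
    have : w = c⁻¹ * 1 * c := by rw [← hc]; group
    rw [this]; group
  have hvinv : v⁻¹ = v := (eq_inv_of_mul_eq_one_left hvv).symm
  -- the descent set
  set I : Set B := {i | cs.IsLeftDescent v i} with hI
  set K := Subgroup.closure (cs.simple '' I) with hK
  have hrd : ∀ i ∈ I, cs.IsRightDescent v i := by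
    intro i hi
    rw [← cs.isLeftDescent_inv_iff, hvinv]
    exact hi
  -- commutation
  have hcomm : ∀ i ∈ I, s i * v = v * s i := by
    intro i hi
    rcases descent_conj_shorter_or_comm cs hi (hrd i hi) with h | h
    · exfalso
      have : IsConj w (s i * v * s i) := by
        refine hconj.trans (isConj_iff.mpr ⟨s i, ?_⟩)
        rw [cs.inv_simple]
      have := hminim _ this
      omega
    · have := congrArg (fun z => z * s i) h
      rw [mul_assoc, cs.simple_mul_simple_self, mul_one] at this
      rw [this]
  -- minimal coset representative
  obtain ⟨x, ⟨u₀, hu₀K, hxeq⟩, hmin, hadd⟩ := parabolic_coset_min cs I v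
  have hvx : v = u₀⁻¹ * x := by rw [hxeq]; group
  have hu₀invK : u₀⁻¹ ∈ K := inv_mem hu₀K
  -- x has no right descent in I
  have hxi : ∀ i ∈ I, ℓ x < ℓ (x * s i) := by
    intro i hi
    have h1 : x * s i = (u₀ * s i * u₀⁻¹) * x := by
      have h2 : v * s i = s i * v := (hcomm i hi).symm
      rw [hvx] at h2
      calc x * s i = u₀ * ((u₀⁻¹ * x) * s i) := by group
        _ = u₀ * (s i * (u₀⁻¹ * x)) := by rw [h2]
        _ = (u₀ * s i * u₀⁻¹) * x := by group
    have hu''K : u₀ * s i * u₀⁻¹ ∈ K :=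
      mul_mem (mul_mem hu₀K (Subgroup.subset_closure ⟨i, hi, rfl⟩)) hu₀invK
    have h3 : ℓ (x * s i) = ℓ (u₀ * s i * u₀⁻¹) + ℓ x := by rw [h1]; exact hadd _ hu''K
    have h4 : u₀ * s i * u₀⁻¹ ≠ 1 := by
      intro h
      have hsi : s i = 1 := by
        have h7 := congrArg (fun z => u₀⁻¹ * z * u₀) h
        rw [show u₀⁻¹ * (u₀ * s i * u₀⁻¹) * u₀ = s i by group] at h7
        rw [h7]; group
      have h8 := cs.length_simple i
      rw [hsi, cs.length_one] at h8
      exact absurd h8 (by omega)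
    have h5 : 1 ≤ ℓ (u₀ * s i * u₀⁻¹) := by
      rcases Nat.eq_zero_or_pos (ℓ (u₀ * s i * u₀⁻¹)) with h | h
      · exact absurd (cs.length_eq_zero_iff.mp h) h4
      · omega
    omega
  -- x = 1
  have hx1 : x = 1 := by
    by_contra hxne
    obtain ⟨c', hc'⟩ := cs.exists_rightDescent_of_ne_one hxne
    have h6 : ℓ (v * s c') < ℓ v := by
      have h7 : v * s c' = u₀⁻¹ * (x * s c') := by rw [hvx]; group
      have h8 : ℓ v = ℓ u₀⁻¹ + ℓ x := by rw [hvx]; exact hadd _ hu₀invK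
      calc ℓ (v * s c') ≤ ℓ u₀⁻¹ + ℓ (x * s c') := by
            rw [h7]; exact cs.length_mul_le _ _
        _ < ℓ u₀⁻¹ + ℓ x := by
            have := hc'
            unfold CoxeterSystem.IsRightDescent at this
            omega
        _ = ℓ v := h8.symm
    have hcI : c' ∈ I := by
      have h9 : cs.IsLeftDescent v⁻¹ c' := cs.isLeftDescent_inv_iff.mpr h6
      rw [hvinv] at h9
      exact h9
    have := hxi c' hcI
    have := hc'
    unfold CoxeterSystem.IsRightDescent at this
    omega
  have hvK : v ∈ K := by
    rw [hvx, hx1, mul_one]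
    exact hu₀invK
  -- centrality
  have hcentral : ∀ g ∈ K, v * g = g * v := by
    intro g hg
    induction hg using Subgroup.closure_induction with
    | mem y hy =>
      obtain ⟨i, hi, rfl⟩ := hy
      exact (hcomm i hi).symm
    | one => rw [mul_one, one_mul]
    | mul a b _ _ iha ihb => rw [← mul_assoc, iha, mul_assoc, ihb, mul_assoc]
    | inv a _ iha =>
      calc v * a⁻¹ = a⁻¹ * (a * v * a⁻¹) := by group
        _ = a⁻¹ * (v * a * a⁻¹) := by rw [← iha]
        _ = a⁻¹ * v := by group
  -- nu v (s i) = 1 for i ∈ I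
  have hnusimple : ∀ i ∈ I, nu cs v (s i) = 1 := by
    intro i hi
    exact (nu_eq_one_iff cs (cs.isReflection_simple i)).mpr (hrd i hi)
  -- reduced word for v
  obtain ⟨ωv, hωvred, hωveq⟩ := cs.exists_reduced_word' v
  -- key: everything in I-inversion form is in lis ωv
  have hkey : ∀ (ζ : List B) (i : B), (∀ b ∈ ζ, b ∈ I) → i ∈ I →
      π ζ * s i * (π ζ)⁻¹ ∈ lis ωv := by
    intro ζ i hζ hi
    apply mem_lis_of_nu_one cs hvinv hωvred hωveq.symm
    rw [nu_conj_word cs (fun b hb => hcomm b (hζ b hb))]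
    exact hnusimple i hi
  -- the longest element property
  have hlongest : ∀ u ∈ K, ℓ u ≤ ℓ v := by
    intro u huK
    obtain ⟨ωu, hωuI, hωured, hωueq⟩ := exists_reduced_word_of_mem_parabolic cs huK
    have hsub : (lis ωu).toFinset ⊆ (lis ωv).toFinset := by
      intro t ht
      rw [List.mem_toFinset] at ht ⊢
      obtain ⟨ζ, i, hζ, hi, rfl⟩ := lis_elt_form cs hωuI ht
      exact hkey ζ i hζ hi
    have hcard1 : (lis ωu).toFinset.card = ℓ u := by
      rw [List.toFinset_card_of_nodup (hωured.nodup_leftInvSeq), cs.length_leftInvSeq]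
      rw [← hωueq]
      exact hωured.symm
    have hcard2 : (lis ωv).toFinset.card = ℓ v := by
      rw [List.toFinset_card_of_nodup (hωvred.nodup_leftInvSeq), cs.length_leftInvSeq]
      rw [hωveq]
      exact hωvred.symm
    rw [← hcard1, ← hcard2]
    exact Finset.card_le_card hsub
  -- finiteness
  have hfin : Finite ↥K := by
    classical
    set A : Finset W := insert (1:W) (lis ωv).toFinset with hA
    have h1A : (1:W) ∈ A := Finset.mem_insert_self _ _
    have hsimpleA : ∀ i ∈ I, s i ∈ A := by
      intro i hi
      apply Finset.mem_insert_of_mem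
      rw [List.mem_toFinset]
      have := hkey [] i (by simp) hi
      simpa using this
    have hsubset : (K : Set W) ⊆ ↑(A ^ (ℓ v) : Finset W) := by
      intro u huK
      obtain ⟨ωu, hωuI, hωured, hωueq⟩ := exists_reduced_word_of_mem_parabolic cs huK
      have hlen : ωu.length ≤ ℓ v := by
        have h2 : ℓ (π ωu) = ωu.length := hωured
        rw [hωueq] at h2
        rw [← h2]
        exact hlongest u huK
      rw [Finset.mem_coe]
      have : (List.map cs.simple ωu).prod ∈ A ^ (ℓ v) := by
        apply prod_mem_pow h1A
        · rwa [List.length_map]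
        · intro y hy
          obtain ⟨b, hb, rfl⟩ := List.mem_map.mp hy
          exact hsimpleA b (hωuI b hb)
      rw [← hωueq]
      exact this
    exact Set.Finite.to_subtype (Set.Finite.subset (A ^ (ℓ v) : Finset W).finite_toSet hsubset)
  exact ⟨I, v, hfin, hvK, hlongest, fun g hg => hcentral g hg, hconj⟩

end RichardsonAux

/-- (Richardson) Every involution in a Coxeter group is conjugate to the longest element
`u = w₀(I)` of a finite standard parabolic subgroup `W_I`, where moreover `u` is central
in `W_I`. -/
theorem stmt_7 {B W : Type*} [Group W] {M : CoxeterMatrix B} (cs : CoxeterSystem M W)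
    (w : W) (hw2 : w * w = 1) (hw1 : w ≠ 1) :
    ∃ (I : Set B) (u : W),
      Finite ↥(Subgroup.closure (cs.simple '' I)) ∧
      u ∈ Subgroup.closure (cs.simple '' I) ∧
      (∀ v ∈ Subgroup.closure (cs.simple '' I), cs.length v ≤ cs.length u) ∧
      (∀ v ∈ Subgroup.closure (cs.simple '' I), u * v = v * u) ∧
      IsConj w u :=
  RichardsonAux.main_result cs w hw2 hw1
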